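/- Every connected balanced S_{1,3}-free bipartite graph with minimum degree at least 4 contains a 2-factor. -/

import Mathlib

open SimpleGraph

/-- `S_{k,l}`: two stars `K_{1,k}` and `K_{1,l}` with centers `0` and `1` joined by an edge.
Leaves of `0` are `2..k+1`; leaves of `1` are `k+2..k+l+1`. -/
def starStar (k l : ℕ) : SimpleGraph (Fin (k + l + 2)) :=
  SimpleGraph.fromRel fun a b =>
    ((a : ℕ) = 0 ∧ (b : ℕ) = 1) ∨
    ((a : ℕ) = 0 ∧ 2 ≤ (b : ℕ) ∧ (b : ℕ) ≤ k + 1) ∨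
    ((a : ℕ) = 1 ∧ k + 2 ≤ (b : ℕ))

/-- `G` contains no induced subgraph isomorphic to `S_{k,l}`. -/
def SFree (k l : ℕ) {V : Type*} (G : SimpleGraph V) : Prop :=
  ¬ ∃ f : Fin (k + l + 2) ↪ V, ∀ a b, G.Adj (f a) (f b) ↔ (starStar k l).Adj a b

/-- `(X, Y)` is a bipartition of the graph `G`. -/
def IsBipartition {V : Type*} (G : SimpleGraph V) (X Y : Set V) : Prop :=
  (∀ v, v ∈ X ∨ v ∈ Y) ∧ Disjoint X Y ∧
    ∀ ⦃u v⦄, G.Adj u v → (u ∈ X ∧ v ∈ Y) ∨ (u ∈ Y ∧ v ∈ X)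

open Finset

section Stmt8Aux

set_option linter.unusedSectionVars false
set_option linter.unusedVariables false

variable {V : Type*} [Fintype V] [DecidableEq V]

set_option maxHeartbeats 1000000 in
lemma stmt8_L1 {V : Type*} [Fintype V] [DecidableEq V] {G : SimpleGraph V} [DecidableRel G.Adj]
    (hfree : SFree 1 3 G)
    (hsame : ∀ u v x : V, G.Adj u x → G.Adj v x → ¬ G.Adj u v)
    {a b w : V} (hab : G.Adj a b) (haw : G.Adj a w) (hwb : w ≠ b) :
    ((G.neighborFinset b) \ (G.neighborFinset w)).card ≤ 2 := by
  by_contra hcon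
  push_neg at hcon
  obtain ⟨t, hts, ht3⟩ := Finset.exists_subset_card_eq hcon
  obtain ⟨l1, l2, l3, h12, h13, h23, rfl⟩ := Finset.card_eq_three.mp ht3
  have m1 : l1 ∈ G.neighborFinset b \ G.neighborFinset w := hts (by simp)
  have m2 : l2 ∈ G.neighborFinset b \ G.neighborFinset w := hts (by simp)
  have m3 : l3 ∈ G.neighborFinset b \ G.neighborFinset w := hts (by simp)
  rw [Finset.mem_sdiff, SimpleGraph.mem_neighborFinset, SimpleGraph.mem_neighborFinset] at m1 m2 m3
  obtain ⟨hbl1, hwl1⟩ := m1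
  obtain ⟨hbl2, hwl2⟩ := m2
  obtain ⟨hbl3, hwl3⟩ := m3
  have nab : a ≠ b := G.ne_of_adj hab
  have naw : a ≠ w := G.ne_of_adj haw
  have nbw : ¬ G.Adj b w := hsame b w a hab.symm haw.symm
  have nal1 : ¬ G.Adj a l1 := hsame a l1 b hab hbl1.symm
  have nal2 : ¬ G.Adj a l2 := hsame a l2 b hab hbl2.symm
  have nal3 : ¬ G.Adj a l3 := hsame a l3 b hab hbl3.symm
  have nl12 : ¬ G.Adj l1 l2 := hsame l1 l2 b hbl1.symm hbl2.symm
  have nl13 : ¬ G.Adj l1 l3 := hsame l1 l3 b hbl1.symm hbl3.symm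
  have nl23 : ¬ G.Adj l2 l3 := hsame l2 l3 b hbl2.symm hbl3.symm
  have hal1 : a ≠ l1 := fun h => hwl1 (h ▸ haw.symm)
  have hal2 : a ≠ l2 := fun h => hwl2 (h ▸ haw.symm)
  have hal3 : a ≠ l3 := fun h => hwl3 (h ▸ haw.symm)
  have hbl1' : b ≠ l1 := G.ne_of_adj hbl1
  have hbl2' : b ≠ l2 := G.ne_of_adj hbl2
  have hbl3' : b ≠ l3 := G.ne_of_adj hbl3
  have hwl1' : w ≠ l1 := fun h => nbw (h ▸ hbl1)
  have hwl2' : w ≠ l2 := fun h => nbw (h ▸ hbl2)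
  have hwl3' : w ≠ l3 := fun h => nbw (h ▸ hbl3)
  apply hfree
  have finj : Function.Injective ![a,b,w,l1,l2,l3] := by
    intro i j hij
    fin_cases i <;> fin_cases j <;>
      first
      | rfl
      | exact absurd hij nab | exact absurd hij nab.symm
      | exact absurd hij naw | exact absurd hij naw.symm
      | exact absurd hij hwb.symm | exact absurd hij hwb
      | exact absurd hij hal1 | exact absurd hij hal1.symm
      | exact absurd hij hal2 | exact absurd hij hal2.symm
      | exact absurd hij hal3 | exact absurd hij hal3.symm
      | exact absurd hij hbl1' | exact absurd hij hbl1'.symm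
      | exact absurd hij hbl2' | exact absurd hij hbl2'.symm
      | exact absurd hij hbl3' | exact absurd hij hbl3'.symm
      | exact absurd hij hwl1' | exact absurd hij hwl1'.symm
      | exact absurd hij hwl2' | exact absurd hij hwl2'.symm
      | exact absurd hij hwl3' | exact absurd hij hwl3'.symm
      | exact absurd hij h12 | exact absurd hij h12.symm
      | exact absurd hij h13 | exact absurd hij h13.symm
      | exact absurd hij h23 | exact absurd hij h23.symm
  refine ⟨⟨![a,b,w,l1,l2,l3], finj⟩, ?_⟩
  intro i j
  simp only [Function.Embedding.coeFn_mk]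
  fin_cases i <;> fin_cases j <;>
    rw [starStar, SimpleGraph.fromRel_adj] <;>
    first
    | exact iff_of_false (G.irrefl) (by decide)
    | exact iff_of_true hab (by decide)
    | exact iff_of_true hab.symm (by decide)
    | exact iff_of_true haw (by decide)
    | exact iff_of_true haw.symm (by decide)
    | exact iff_of_true hbl1 (by decide)
    | exact iff_of_true hbl1.symm (by decide)
    | exact iff_of_true hbl2 (by decide)
    | exact iff_of_true hbl2.symm (by decide)
    | exact iff_of_true hbl3 (by decide)
    | exact iff_of_true hbl3.symm (by decide)
    | exact iff_of_false nbw (by decide)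
    | exact iff_of_false (fun h => nbw h.symm) (by decide)
    | exact iff_of_false nal1 (by decide)
    | exact iff_of_false (fun h => nal1 h.symm) (by decide)
    | exact iff_of_false nal2 (by decide)
    | exact iff_of_false (fun h => nal2 h.symm) (by decide)
    | exact iff_of_false nal3 (by decide)
    | exact iff_of_false (fun h => nal3 h.symm) (by decide)
    | exact iff_of_false hwl1 (by decide)
    | exact iff_of_false (fun h => hwl1 h.symm) (by decide)
    | exact iff_of_false hwl2 (by decide)
    | exact iff_of_false (fun h => hwl2 h.symm) (by decide)
    | exact iff_of_false hwl3 (by decide)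
    | exact iff_of_false (fun h => hwl3 h.symm) (by decide)
    | exact iff_of_false nl12 (by decide)
    | exact iff_of_false (fun h => nl12 h.symm) (by decide)
    | exact iff_of_false nl13 (by decide)
    | exact iff_of_false (fun h => nl13 h.symm) (by decide)
    | exact iff_of_false nl23 (by decide)
    | exact iff_of_false (fun h => nl23 h.symm) (by decide)


lemma stmt8_walk {G : SimpleGraph V} (P : V → Prop)
    (step : ∀ u v, G.Adj u v → P u → P v) {x y : V} (p : G.Walk x y) : P x → P y := by
  induction p with
  | nil => exact id
  | cons h q ih => exact fun hx => ih (step _ _ h hx)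

lemma stmt8_cert {G : SimpleGraph V} [DecidableRel G.Adj] {Xf Yf : Finset V}
    (hdisjXY : ∀ v : V, ¬(v ∈ Xf ∧ v ∈ Yf))
    (hadj : ∀ u v : V, G.Adj u v → (u ∈ Xf ∧ v ∈ Yf) ∨ (u ∈ Yf ∧ v ∈ Xf))
    (hconn : G.Connected) (hdeg4 : ∀ v, 4 ≤ (G.neighborFinset v).card)
    {y0 y1 : V} (hy0 : y0 ∈ Yf) (hy1 : y1 ∈ Yf)
    (hEmpty : (G.neighborFinset y0) ∩ (G.neighborFinset y1) = ∅) :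
    ∃ p m q : V, p ∈ Yf ∧ m ∈ Yf ∧ q ∈ Yf ∧
      (G.neighborFinset p) ∩ (G.neighborFinset q) = ∅ ∧
      ((G.neighborFinset p) ∩ (G.neighborFinset m)).Nonempty ∧
      ((G.neighborFinset m) ∩ (G.neighborFinset q)).Nonempty := by
  have memNB : ∀ u w : V, u ∈ G.neighborFinset w ↔ G.Adj w u := fun u w => by
    simp [SimpleGraph.mem_neighborFinset]
  set C : Prop := ∃ p m q : V, p ∈ Yf ∧ m ∈ Yf ∧ q ∈ Yf ∧
      (G.neighborFinset p) ∩ (G.neighborFinset q) = ∅ ∧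
      ((G.neighborFinset p) ∩ (G.neighborFinset m)).Nonempty ∧
      ((G.neighborFinset m) ∩ (G.neighborFinset q)).Nonempty with hC
  set Inv : V → Prop := fun v => C ∨
      (v ∈ Yf ∧ ((G.neighborFinset y0) ∩ (G.neighborFinset v)).Nonempty) ∨
      (v ∈ Xf ∧ ∃ u, u ∈ Yf ∧ G.Adj u v ∧
        ((G.neighborFinset y0) ∩ (G.neighborFinset u)).Nonempty) with hInv
  have sideY : ∀ u v : V, G.Adj u v → u ∈ Yf → v ∈ Xf := by
    intro u v h hu
    rcases hadj u v h with ⟨hx, _⟩ | ⟨_, hv⟩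
    · exact absurd ⟨hx, hu⟩ (hdisjXY u)
    · exact hv
  have sideX : ∀ u v : V, G.Adj u v → u ∈ Xf → v ∈ Yf := by
    intro u v h hu
    rcases hadj u v h with ⟨_, hv⟩ | ⟨hy, _⟩
    · exact hv
    · exact absurd ⟨hu, hy⟩ (hdisjXY u)
  have step : ∀ u v, G.Adj u v → Inv u → Inv v := by
    intro u v huv hI
    rcases hI with hc | ⟨hu, hsim⟩ | ⟨hu, u', hu', hu'u, hsim⟩
    · exact Or.inl hc
    · exact Or.inr (Or.inr ⟨sideY u v huv hu, u, hu, huv, hsim⟩)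
    · by_cases hw : ((G.neighborFinset y0) ∩ (G.neighborFinset v)).Nonempty
      · exact Or.inr (Or.inl ⟨sideX u v huv hu, hw⟩)
      · refine Or.inl ⟨y0, u', v, hy0, hu', sideX u v huv hu,
          Finset.not_nonempty_iff_eq_empty.mp hw, hsim, ?_⟩
        exact ⟨u, Finset.mem_inter.mpr ⟨(memNB _ _).mpr hu'u,
          (memNB _ _).mpr huv.symm⟩⟩
  have base : Inv y0 := by
    refine Or.inr (Or.inl ⟨hy0, ?_⟩)
    rw [Finset.inter_self]
    rw [← Finset.card_pos]
    have := hdeg4 y0; omega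
  obtain ⟨p⟩ := hconn.preconnected y0 y1
  have hy1I : Inv y1 := stmt8_walk Inv step p base
  rcases hy1I with hc | ⟨_, hne⟩ | ⟨hx, _⟩
  · exact hc
  · rw [hEmpty] at hne; exact absurd hne Finset.not_nonempty_empty
  · exact absurd ⟨hx, hy1⟩ (hdisjXY y1)

lemma stmt8_degY4 {G : SimpleGraph V} [DecidableRel G.Adj] {Xf Yf : Finset V}
    (hdisjXY : ∀ v : V, ¬(v ∈ Xf ∧ v ∈ Yf))
    (hadj : ∀ u v : V, G.Adj u v → (u ∈ Xf ∧ v ∈ Yf) ∨ (u ∈ Yf ∧ v ∈ Xf))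
    (hconn : G.Connected) (hdeg4 : ∀ v, 4 ≤ (G.neighborFinset v).card)
    (hsim : ∀ y y' : V, ((G.neighborFinset y) ∩ (G.neighborFinset y')).Nonempty →
      ((G.neighborFinset y) \ (G.neighborFinset y')).card ≤ 2)
    {p m q : V} (hm : m ∈ Yf)
    (hpq : (G.neighborFinset p) ∩ (G.neighborFinset q) = ∅)
    (hpm : ((G.neighborFinset p) ∩ (G.neighborFinset m)).Nonempty)
    (hmq : ((G.neighborFinset m) ∩ (G.neighborFinset q)).Nonempty) :
    ∀ y ∈ Yf, (G.neighborFinset y).card ≤ 4 := by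
  have memNB : ∀ u w : V, u ∈ G.neighborFinset w ↔ G.Adj w u := fun u w => by
    simp [SimpleGraph.mem_neighborFinset]
  have sideY : ∀ u v : V, G.Adj u v → u ∈ Yf → v ∈ Xf := by
    intro u v h hu
    rcases hadj u v h with ⟨hx, _⟩ | ⟨_, hv⟩
    · exact absurd ⟨hx, hu⟩ (hdisjXY u)
    · exact hv
  have sideX : ∀ u v : V, G.Adj u v → u ∈ Xf → v ∈ Yf := by
    intro u v h hu
    rcases hadj u v h with ⟨_, hv⟩ | ⟨hy, _⟩
    · exact hv
    · exact absurd ⟨hu, hy⟩ (hdisjXY u)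
  have pinch : ∀ z, ((G.neighborFinset z) ∩ (G.neighborFinset p)).Nonempty →
      ((G.neighborFinset z) ∩ (G.neighborFinset q)).Nonempty →
      (G.neighborFinset z).card ≤ 4 := by
    intro z h1 h2
    have e1 : ((G.neighborFinset z) \ (G.neighborFinset p)).card ≤ 2 := hsim z p h1
    have key : (G.neighborFinset z) ∩ (G.neighborFinset p)
        ⊆ (G.neighborFinset z) \ (G.neighborFinset q) := by
      intro t ht
      obtain ⟨htz, htp⟩ := Finset.mem_inter.mp ht
      refine Finset.mem_sdiff.mpr ⟨htz, fun hq => ?_⟩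
      have : t ∈ (G.neighborFinset p) ∩ (G.neighborFinset q) :=
        Finset.mem_inter.mpr ⟨htp, hq⟩
      rw [hpq] at this
      exact absurd this (Finset.notMem_empty t)
    have e2 : ((G.neighborFinset z) ∩ (G.neighborFinset p)).card ≤ 2 :=
      le_trans (Finset.card_le_card key) (hsim z q h2)
    have e3 := Finset.card_inter_add_card_sdiff (G.neighborFinset z) (G.neighborFinset p)
    omega
  have hm4 : (G.neighborFinset m).card = 4 := by
    have h1 : ((G.neighborFinset m) ∩ (G.neighborFinset p)).Nonempty := by
      rwa [Finset.inter_comm] at hpm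
    have := pinch m h1 hmq
    have := hdeg4 m
    omega
  have hmp_ge : 2 ≤ ((G.neighborFinset m) ∩ (G.neighborFinset p)).card := by
    have h1 : ((G.neighborFinset m) ∩ (G.neighborFinset p)).Nonempty := by
      rwa [Finset.inter_comm] at hpm
    have e1 := hsim m p h1
    have e2 := Finset.card_inter_add_card_sdiff (G.neighborFinset m) (G.neighborFinset p)
    omega
  have hmq_ge : 2 ≤ ((G.neighborFinset m) ∩ (G.neighborFinset q)).card := by
    have e1 := hsim m q hmq
    have e2 := Finset.card_inter_add_card_sdiff (G.neighborFinset m) (G.neighborFinset q)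
    omega
  have hdisj2 : Disjoint ((G.neighborFinset m) ∩ (G.neighborFinset p))
      ((G.neighborFinset m) ∩ (G.neighborFinset q)) := by
    rw [Finset.disjoint_left]
    intro t ht1 ht2
    have : t ∈ (G.neighborFinset p) ∩ (G.neighborFinset q) :=
      Finset.mem_inter.mpr ⟨(Finset.mem_inter.mp ht1).2, (Finset.mem_inter.mp ht2).2⟩
    rw [hpq] at this
    exact absurd this (Finset.notMem_empty t)
  have hunion_card : ((G.neighborFinset m) ∩ (G.neighborFinset p)).card
      + ((G.neighborFinset m) ∩ (G.neighborFinset q)).card ≤ 4 := by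
    rw [← Finset.card_union_of_disjoint hdisj2]
    calc (((G.neighborFinset m) ∩ (G.neighborFinset p))
        ∪ ((G.neighborFinset m) ∩ (G.neighborFinset q))).card
        ≤ (G.neighborFinset m).card := Finset.card_le_card (by
          intro t ht
          rcases Finset.mem_union.mp ht with h | h
          · exact (Finset.mem_inter.mp h).1
          · exact (Finset.mem_inter.mp h).1)
      _ = 4 := hm4
  have hmp_le : ((G.neighborFinset m) ∩ (G.neighborFinset p)).card ≤ 2 := by omega
  have hmq_le : ((G.neighborFinset m) ∩ (G.neighborFinset q)).card ≤ 2 := by omega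
  have hcov : G.neighborFinset m ⊆ (G.neighborFinset p) ∪ (G.neighborFinset q) := by
    intro t ht
    by_contra hnot
    rw [Finset.mem_union] at hnot
    push_neg at hnot
    have hsub : ((G.neighborFinset m) ∩ (G.neighborFinset p))
        ∪ ((G.neighborFinset m) ∩ (G.neighborFinset q)) ⊆ (G.neighborFinset m).erase t := by
      intro s hs
      rcases Finset.mem_union.mp hs with h | h
      · obtain ⟨h1, h2⟩ := Finset.mem_inter.mp h
        exact Finset.mem_erase.mpr ⟨fun he => hnot.1 (he ▸ h2), h1⟩
      · obtain ⟨h1, h2⟩ := Finset.mem_inter.mp h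
        exact Finset.mem_erase.mpr ⟨fun he => hnot.2 (he ▸ h2), h1⟩
    have hcard := Finset.card_le_card hsub
    rw [Finset.card_union_of_disjoint hdisj2, Finset.card_erase_of_mem ht, hm4] at hcard
    omega
  have hz : ∀ z, ((G.neighborFinset z) ∩ (G.neighborFinset m)).Nonempty →
      (G.neighborFinset z).card ≤ 4 := by
    intro z hzm
    have ekey : ∀ r : V, (G.neighborFinset r) ∩ (G.neighborFinset m) = ∅ →
        ((G.neighborFinset m) ∩ (G.neighborFinset r)).card = 0 → True := fun _ _ _ => trivial
    by_cases h1 : ((G.neighborFinset z) ∩ (G.neighborFinset p)).Nonempty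
    · by_cases h2 : ((G.neighborFinset z) ∩ (G.neighborFinset q)).Nonempty
      · exact pinch z h1 h2
      · have hsub : (G.neighborFinset z) ∩ (G.neighborFinset m)
            ⊆ (G.neighborFinset m) ∩ (G.neighborFinset p) := by
          intro t ht
          obtain ⟨htz, htm⟩ := Finset.mem_inter.mp ht
          rcases Finset.mem_union.mp (hcov htm) with hp | hq
          · exact Finset.mem_inter.mpr ⟨htm, hp⟩
          · exact absurd ⟨t, Finset.mem_inter.mpr ⟨htz, hq⟩⟩ h2
        have e1 : ((G.neighborFinset z) ∩ (G.neighborFinset m)).card ≤ 2 :=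
          le_trans (Finset.card_le_card hsub) hmp_le
        have e2 := hsim z m hzm
        have e3 := Finset.card_inter_add_card_sdiff (G.neighborFinset z) (G.neighborFinset m)
        omega
    · have hsub : (G.neighborFinset z) ∩ (G.neighborFinset m)
          ⊆ (G.neighborFinset m) ∩ (G.neighborFinset q) := by
        intro t ht
        obtain ⟨htz, htm⟩ := Finset.mem_inter.mp ht
        rcases Finset.mem_union.mp (hcov htm) with hp | hq
        · exact absurd ⟨t, Finset.mem_inter.mpr ⟨htz, hp⟩⟩ h1
        · exact Finset.mem_inter.mpr ⟨htm, hq⟩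
      have e1 : ((G.neighborFinset z) ∩ (G.neighborFinset m)).card ≤ 2 :=
        le_trans (Finset.card_le_card hsub) hmq_le
      have e2 := hsim z m hzm
      have e3 := Finset.card_inter_add_card_sdiff (G.neighborFinset z) (G.neighborFinset m)
      omega
  set Tp : V → Prop := fun x => ∀ δ, δ ∈ G.neighborFinset x → (G.neighborFinset δ).card ≤ 4
    with hTp
  have s6 : ∀ x ∈ G.neighborFinset m, Tp x := by
    intro x hx δ hδ
    refine hz δ ⟨x, Finset.mem_inter.mpr ⟨?_, hx⟩⟩
    exact (memNB _ _).mpr ((memNB _ _).mp hδ).symm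
  have prop : ∀ γ, (G.neighborFinset γ).card ≤ 4 → ∀ a b, a ∈ G.neighborFinset γ →
      b ∈ G.neighborFinset γ → a ≠ b → Tp a → Tp b → ∀ c ∈ G.neighborFinset γ, Tp c := by
    intro γ hγ a b ha hb hab hTa hTb c hc δ hδ
    by_cases hda : G.Adj a δ
    · exact hTa δ ((memNB _ _).mpr hda)
    by_cases hdb : G.Adj b δ
    · exact hTb δ ((memNB _ _).mpr hdb)
    have hδc : δ ∈ G.neighborFinset c → True := fun _ => trivial
    have hcδ : c ∈ G.neighborFinset δ :=
      (memNB _ _).mpr ((memNB _ _).mp hδ).symm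
    have hδγ : ((G.neighborFinset δ) ∩ (G.neighborFinset γ)).Nonempty :=
      ⟨c, Finset.mem_inter.mpr ⟨hcδ, hc⟩⟩
    have hsub : (G.neighborFinset δ) ∩ (G.neighborFinset γ)
        ⊆ ((G.neighborFinset γ).erase a).erase b := by
      intro t ht
      obtain ⟨htδ, htγ⟩ := Finset.mem_inter.mp ht
      refine Finset.mem_erase.mpr ⟨fun he => ?_, Finset.mem_erase.mpr ⟨fun he => ?_, htγ⟩⟩
      · exact hdb (((memNB _ _).mp (he ▸ htδ)).symm)
      · exact hda (((memNB _ _).mp (he ▸ htδ)).symm)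
    have e1 : (((G.neighborFinset γ).erase a).erase b).card ≤ 2 := by
      rw [Finset.card_erase_of_mem (Finset.mem_erase.mpr ⟨hab.symm, hb⟩),
        Finset.card_erase_of_mem ha]
      omega
    have e2 : ((G.neighborFinset δ) ∩ (G.neighborFinset γ)).card ≤ 2 :=
      le_trans (Finset.card_le_card hsub) e1
    have e3 := hsim δ γ hδγ
    have e4 := Finset.card_inter_add_card_sdiff (G.neighborFinset δ) (G.neighborFinset γ)
    omega
  set Pm : V → Prop := fun y => (G.neighborFinset y).card ≤ 4 ∧ ∀ x ∈ G.neighborFinset y, Tp x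
    with hPm
  have base : Pm m := ⟨le_of_eq hm4, s6⟩
  have step8 : ∀ y y', Pm y → ((G.neighborFinset y) ∩ (G.neighborFinset y')).Nonempty → Pm y' := by
    intro y y' hPy hne
    obtain ⟨hy4, hyT⟩ := hPy
    obtain ⟨x, hx⟩ := hne
    obtain ⟨hx1, hx2⟩ := Finset.mem_inter.mp hx
    have hy'x : y' ∈ G.neighborFinset x :=
      (memNB _ _).mpr ((memNB _ _).mp hx2).symm
    have h4' : (G.neighborFinset y').card ≤ 4 := hyT x hx1 y' hy'x
    have hcard2 : 2 ≤ ((G.neighborFinset y') ∩ (G.neighborFinset y)).card := by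
      have h1 := hsim y' y ⟨x, Finset.mem_inter.mpr ⟨hx2, hx1⟩⟩
      have h2 := Finset.card_inter_add_card_sdiff (G.neighborFinset y') (G.neighborFinset y)
      have := hdeg4 y'
      omega
    obtain ⟨a, ha, b, hb, hab⟩ := Finset.one_lt_card.mp (by omega :
      1 < ((G.neighborFinset y') ∩ (G.neighborFinset y)).card)
    obtain ⟨ha1, ha2⟩ := Finset.mem_inter.mp ha
    obtain ⟨hb1, hb2⟩ := Finset.mem_inter.mp hb
    exact ⟨h4', prop y' h4' a b ha1 hb1 hab (hyT a ha2) (hyT b hb2)⟩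
  set Inv2 : V → Prop := fun v => (v ∈ Yf ∧ Pm v) ∨
      (v ∈ Xf ∧ ∃ u, u ∈ Yf ∧ G.Adj u v ∧ Pm u) with hInv2
  have step2 : ∀ u v, G.Adj u v → Inv2 u → Inv2 v := by
    intro u v huv hI
    rcases hI with ⟨hu, hP⟩ | ⟨hu, u', hu', hu'u, hP⟩
    · exact Or.inr ⟨sideY u v huv hu, u, hu, huv, hP⟩
    · refine Or.inl ⟨sideX u v huv hu, ?_⟩
      refine step8 u' v hP ⟨u, Finset.mem_inter.mpr ⟨?_, ?_⟩⟩
      · exact (memNB _ _).mpr hu'u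
      · exact (memNB _ _).mpr huv.symm
  intro y hy
  obtain ⟨pw⟩ := hconn.preconnected m y
  have hyI : Inv2 y := stmt8_walk Inv2 step2 pw (Or.inl ⟨hm, base⟩)
  rcases hyI with ⟨_, hP⟩ | ⟨hx, _⟩
  · exact hP.1
  · exact absurd ⟨hx, hy⟩ (hdisjXY y)


lemma stmt8_dcount (G : SimpleGraph V) [DecidableRel G.Adj] (S : Finset V) :
    ∑ x ∈ S, (G.neighborFinset x).card
      = ∑ y ∈ Finset.univ, ((G.neighborFinset y) ∩ S).card := by
  have h1 : ∀ x : V, (G.neighborFinset x).card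
      = ∑ y ∈ Finset.univ, if G.Adj x y then 1 else 0 := by
    intro x; rw [SimpleGraph.neighborFinset_eq_filter, Finset.card_filter]
  have h2 : ∀ y : V, ((G.neighborFinset y) ∩ S).card
      = ∑ x ∈ S, if G.Adj x y then 1 else 0 := by
    intro y
    have : (G.neighborFinset y) ∩ S = S.filter (fun x => G.Adj x y) := by
      ext x
      simp only [Finset.mem_inter, SimpleGraph.mem_neighborFinset, Finset.mem_filter]
      rw [SimpleGraph.adj_comm]; tauto
    rw [this, Finset.card_filter]
  simp_rw [h1, h2]
  exact Finset.sum_comm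

lemma stmt8_dcount' (G : SimpleGraph V) [DecidableRel G.Adj] (F : V → V) (S : Finset V) :
    ∑ x ∈ S, ((G.neighborFinset x).erase (F x)).card
      = ∑ y ∈ Finset.univ, (S.filter (fun x => G.Adj x y ∧ F x ≠ y)).card := by
  have h1 : ∀ x : V, ((G.neighborFinset x).erase (F x)).card
      = ∑ y ∈ Finset.univ, if G.Adj x y ∧ F x ≠ y then 1 else 0 := by
    intro x
    have : (G.neighborFinset x).erase (F x)
        = Finset.univ.filter (fun y => G.Adj x y ∧ F x ≠ y) := by
      ext y
      simp only [Finset.mem_erase, SimpleGraph.mem_neighborFinset, Finset.mem_filter,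
        Finset.mem_univ, true_and, ne_comm]
      tauto
    rw [this, Finset.card_filter]
  simp_rw [h1, Finset.card_filter]
  exact Finset.sum_comm

section Hall

variable {G : SimpleGraph V} [DecidableRel G.Adj] {Xf Yf : Finset V}

/-- Hall condition for `G`, case B (all `Y`-degrees at most 4). -/
lemma stmt8_hallB
    (hdisjXY : ∀ v : V, ¬(v ∈ Xf ∧ v ∈ Yf))
    (hadj : ∀ u v : V, G.Adj u v → (u ∈ Xf ∧ v ∈ Yf) ∨ (u ∈ Yf ∧ v ∈ Xf))
    (hdeg4 : ∀ v, 4 ≤ (G.neighborFinset v).card)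
    (hY4 : ∀ y ∈ Yf, (G.neighborFinset y).card ≤ 4)
    (S : Finset V) (hS : S ⊆ Xf) :
    S.card ≤ (S.biUnion (fun x => G.neighborFinset x)).card := by
  set NS := S.biUnion (fun x => G.neighborFinset x) with hNS
  have hlow : 4 * S.card ≤ ∑ x ∈ S, (G.neighborFinset x).card := by
    calc 4 * S.card = S.card • 4 := by rw [smul_eq_mul]; ring
    _ ≤ ∑ x ∈ S, (G.neighborFinset x).card :=
      Finset.card_nsmul_le_sum S _ 4 (fun x _ => hdeg4 x)
  rw [stmt8_dcount G S] at hlow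
  have hres : ∑ y ∈ Finset.univ, ((G.neighborFinset y) ∩ S).card
      = ∑ y ∈ NS, ((G.neighborFinset y) ∩ S).card := by
    refine (Finset.sum_subset (Finset.subset_univ NS) ?_).symm
    intro y _ hyn
    rw [Finset.card_eq_zero, Finset.eq_empty_iff_forall_notMem]
    intro x hx
    obtain ⟨hx1, hx2⟩ := Finset.mem_inter.mp hx
    exact hyn (Finset.mem_biUnion.mpr ⟨x, hx2,
      (SimpleGraph.mem_neighborFinset _ _ _).mpr ((SimpleGraph.mem_neighborFinset _ _ _).mp hx1).symm⟩)
  have hup : ∑ y ∈ NS, ((G.neighborFinset y) ∩ S).card ≤ NS.card * 4 := by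
    calc ∑ y ∈ NS, ((G.neighborFinset y) ∩ S).card ≤ NS.card • 4 := by
          refine Finset.sum_le_card_nsmul NS _ 4 ?_
          intro y hy
          obtain ⟨x, hxS, hyx⟩ := Finset.mem_biUnion.mp hy
          have hyY : y ∈ Yf := by
            rcases hadj x y ((SimpleGraph.mem_neighborFinset _ _ _).mp hyx) with ⟨_, h⟩ | ⟨h, _⟩
            · exact h
            · exact absurd ⟨hS hxS, h⟩ (hdisjXY x)
          exact le_trans (Finset.card_le_card (Finset.inter_subset_left)) (hY4 y hyY)
    _ = NS.card * 4 := by rw [smul_eq_mul]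
  rw [hres] at hlow
  omega

/-- Hall condition for `G` minus a perfect matching, case B. -/
lemma stmt8_hallB' (F : V → V)
    (hdisjXY : ∀ v : V, ¬(v ∈ Xf ∧ v ∈ Yf))
    (hadj : ∀ u v : V, G.Adj u v → (u ∈ Xf ∧ v ∈ Yf) ∨ (u ∈ Yf ∧ v ∈ Xf))
    (hdeg4 : ∀ v, 4 ≤ (G.neighborFinset v).card)
    (hY4 : ∀ y ∈ Yf, (G.neighborFinset y).card ≤ 4)
    (hFadj : ∀ x ∈ Xf, G.Adj x (F x))
    (hFsurj : ∀ y ∈ Yf, ∃ x ∈ Xf, F x = y)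
    (S : Finset V) (hS : S ⊆ Xf) :
    S.card ≤ (S.biUnion (fun x => (G.neighborFinset x).erase (F x))).card := by
  set NS := S.biUnion (fun x => (G.neighborFinset x).erase (F x)) with hNS
  have hlow : 3 * S.card ≤ ∑ x ∈ S, ((G.neighborFinset x).erase (F x)).card := by
    calc 3 * S.card = S.card • 3 := by rw [smul_eq_mul]; ring
    _ ≤ _ := by
      refine Finset.card_nsmul_le_sum S _ 3 ?_
      intro x _
      have h1 := hdeg4 x
      have h2 := Finset.pred_card_le_card_erase (s := G.neighborFinset x) (a := F x)
      omega
  rw [stmt8_dcount' G F S] at hlow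
  have hres : ∑ y ∈ Finset.univ, (S.filter (fun x => G.Adj x y ∧ F x ≠ y)).card
      = ∑ y ∈ NS, (S.filter (fun x => G.Adj x y ∧ F x ≠ y)).card := by
    refine (Finset.sum_subset (Finset.subset_univ NS) ?_).symm
    intro y _ hyn
    rw [Finset.card_eq_zero, Finset.eq_empty_iff_forall_notMem]
    intro x hx
    obtain ⟨hxS, hxa, hxF⟩ := Finset.mem_filter.mp hx
    refine hyn (Finset.mem_biUnion.mpr ⟨x, hxS, Finset.mem_erase.mpr
      ⟨fun h => hxF h.symm, (SimpleGraph.mem_neighborFinset _ _ _).mpr hxa⟩⟩)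
  have hup : ∑ y ∈ NS, (S.filter (fun x => G.Adj x y ∧ F x ≠ y)).card ≤ NS.card * 3 := by
    calc _ ≤ NS.card • 3 := by
          refine Finset.sum_le_card_nsmul NS _ 3 ?_
          intro y hy
          obtain ⟨x, hxS, hyx⟩ := Finset.mem_biUnion.mp hy
          have hyY : y ∈ Yf := by
            have hyx' := Finset.mem_erase.mp hyx
            rcases hadj x y ((SimpleGraph.mem_neighborFinset _ _ _).mp hyx'.2) with ⟨_, h⟩ | ⟨h, _⟩
            · exact h
            · exact absurd ⟨hS hxS, h⟩ (hdisjXY x)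
          obtain ⟨xs, hxsX, hxsF⟩ := hFsurj y hyY
          have hxs : xs ∈ G.neighborFinset y := by
            rw [SimpleGraph.mem_neighborFinset]
            exact (hxsF ▸ (hFadj xs hxsX)).symm
          have hsub : S.filter (fun x => G.Adj x y ∧ F x ≠ y) ⊆ (G.neighborFinset y).erase xs := by
            intro t ht
            obtain ⟨htS, hta, htF⟩ := Finset.mem_filter.mp ht
            refine Finset.mem_erase.mpr ⟨fun he => htF (by rw [he, hxsF]),
              (SimpleGraph.mem_neighborFinset _ _ _).mpr hta.symm⟩
          calc (S.filter (fun x => G.Adj x y ∧ F x ≠ y)).card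
              ≤ ((G.neighborFinset y).erase xs).card := Finset.card_le_card hsub
            _ = (G.neighborFinset y).card - 1 := Finset.card_erase_of_mem hxs
            _ ≤ 3 := by have := hY4 y hyY; omega
    _ = NS.card * 3 := by rw [smul_eq_mul]
  rw [hres] at hlow
  omega

/-- Hall condition for `G`, case A (dense `Y` side). -/
lemma stmt8_hallA
    (hXY : ∀ v : V, v ∈ Xf ∨ v ∈ Yf)
    (hdisjXY : ∀ v : V, ¬(v ∈ Xf ∧ v ∈ Yf))
    (hadj : ∀ u v : V, G.Adj u v → (u ∈ Xf ∧ v ∈ Yf) ∨ (u ∈ Yf ∧ v ∈ Xf))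
    (hdeg4 : ∀ v, 4 ≤ (G.neighborFinset v).card)
    (hbal : Xf.card = Yf.card)
    (hsim : ∀ y y' : V, ((G.neighborFinset y) ∩ (G.neighborFinset y')).Nonempty →
      ((G.neighborFinset y) \ (G.neighborFinset y')).card ≤ 2)
    (hdense : ∀ y ∈ Yf, ∀ y' ∈ Yf, ((G.neighborFinset y) ∩ (G.neighborFinset y')).Nonempty)
    (S : Finset V) (hS : S ⊆ Xf) :
    S.card ≤ (S.biUnion (fun x => G.neighborFinset x)).card := by
  set NS := S.biUnion (fun x => G.neighborFinset x) with hNS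
  have hNSY : NS ⊆ Yf := by
    intro y hy
    obtain ⟨x, hxS, hyx⟩ := Finset.mem_biUnion.mp hy
    rcases hadj x y ((SimpleGraph.mem_neighborFinset _ _ _).mp hyx) with ⟨_, h⟩ | ⟨h, _⟩
    · exact h
    · exact absurd ⟨hS hxS, h⟩ (hdisjXY x)
  by_cases h0 : ∃ y0 ∈ Yf, (G.neighborFinset y0) ∩ S = ∅
  · obtain ⟨y0, hy0, hy0S⟩ := h0
    have hlow : 4 * S.card ≤ ∑ x ∈ S, (G.neighborFinset x).card := by
      calc 4 * S.card = S.card • 4 := by rw [smul_eq_mul]; ring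
      _ ≤ _ := Finset.card_nsmul_le_sum S _ 4 (fun x _ => hdeg4 x)
    rw [stmt8_dcount G S] at hlow
    have hres : ∑ y ∈ Finset.univ, ((G.neighborFinset y) ∩ S).card
        = ∑ y ∈ NS, ((G.neighborFinset y) ∩ S).card := by
      refine (Finset.sum_subset (Finset.subset_univ NS) ?_).symm
      intro y _ hyn
      rw [Finset.card_eq_zero, Finset.eq_empty_iff_forall_notMem]
      intro x hx
      obtain ⟨hx1, hx2⟩ := Finset.mem_inter.mp hx
      exact hyn (Finset.mem_biUnion.mpr ⟨x, hx2,
        (SimpleGraph.mem_neighborFinset _ _ _).mpr ((SimpleGraph.mem_neighborFinset _ _ _).mp hx1).symm⟩)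
    have hup : ∑ y ∈ NS, ((G.neighborFinset y) ∩ S).card ≤ NS.card * 2 := by
      calc _ ≤ NS.card • 2 := by
            refine Finset.sum_le_card_nsmul NS _ 2 ?_
            intro y hy
            have hsub : (G.neighborFinset y) ∩ S ⊆ (G.neighborFinset y) \ (G.neighborFinset y0) := by
              intro t ht
              obtain ⟨ht1, ht2⟩ := Finset.mem_inter.mp ht
              refine Finset.mem_sdiff.mpr ⟨ht1, fun h => ?_⟩
              have : t ∈ (G.neighborFinset y0) ∩ S := Finset.mem_inter.mpr ⟨h, ht2⟩
              rw [hy0S] at this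
              exact absurd this (Finset.notMem_empty t)
            exact le_trans (Finset.card_le_card hsub) (hsim y y0 (hdense y (hNSY hy) y0 hy0))
      _ = NS.card * 2 := by rw [smul_eq_mul]
    rw [hres] at hlow
    omega
  · push_neg at h0
    have hYNS : Yf ⊆ NS := by
      intro y hy
      obtain ⟨x, hx⟩ := (h0 y hy)
      obtain ⟨hx1, hx2⟩ := Finset.mem_inter.mp hx
      exact Finset.mem_biUnion.mpr ⟨x, hx2,
        (SimpleGraph.mem_neighborFinset _ _ _).mpr ((SimpleGraph.mem_neighborFinset _ _ _).mp hx1).symm⟩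
    calc S.card ≤ Xf.card := Finset.card_le_card hS
    _ = Yf.card := hbal
    _ ≤ NS.card := Finset.card_le_card hYNS

/-- Hall condition for `G` minus a perfect matching, case A. -/
lemma stmt8_hallA' (F : V → V)
    (hXY : ∀ v : V, v ∈ Xf ∨ v ∈ Yf)
    (hdisjXY : ∀ v : V, ¬(v ∈ Xf ∧ v ∈ Yf))
    (hadj : ∀ u v : V, G.Adj u v → (u ∈ Xf ∧ v ∈ Yf) ∨ (u ∈ Yf ∧ v ∈ Xf))
    (hdeg4 : ∀ v, 4 ≤ (G.neighborFinset v).card)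
    (hbal : Xf.card = Yf.card)
    (hsim : ∀ y y' : V, ((G.neighborFinset y) ∩ (G.neighborFinset y')).Nonempty →
      ((G.neighborFinset y) \ (G.neighborFinset y')).card ≤ 2)
    (hdense : ∀ y ∈ Yf, ∀ y' ∈ Yf, ((G.neighborFinset y) ∩ (G.neighborFinset y')).Nonempty)
    (hFinj : Set.InjOn F Xf)
    (S : Finset V) (hS : S ⊆ Xf) :
    S.card ≤ (S.biUnion (fun x => (G.neighborFinset x).erase (F x))).card := by
  set NS := S.biUnion (fun x => (G.neighborFinset x).erase (F x)) with hNS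
  have hNSY : NS ⊆ Yf := by
    intro y hy
    obtain ⟨x, hxS, hyx⟩ := Finset.mem_biUnion.mp hy
    have hyx' := Finset.mem_erase.mp hyx
    rcases hadj x y ((SimpleGraph.mem_neighborFinset _ _ _).mp hyx'.2) with ⟨_, h⟩ | ⟨h, _⟩
    · exact h
    · exact absurd ⟨hS hxS, h⟩ (hdisjXY x)
  by_cases h0 : ∃ y0 ∈ Yf, (G.neighborFinset y0) ∩ S = ∅
  · obtain ⟨y0, hy0, hy0S⟩ := h0
    have hlow : 3 * S.card ≤ ∑ x ∈ S, ((G.neighborFinset x).erase (F x)).card := by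
      calc 3 * S.card = S.card • 3 := by rw [smul_eq_mul]; ring
      _ ≤ _ := by
        refine Finset.card_nsmul_le_sum S _ 3 ?_
        intro x _
        have h1 := hdeg4 x
        have h2 := Finset.pred_card_le_card_erase (s := G.neighborFinset x) (a := F x)
        omega
    rw [stmt8_dcount' G F S] at hlow
    have hres : ∑ y ∈ Finset.univ, (S.filter (fun x => G.Adj x y ∧ F x ≠ y)).card
        = ∑ y ∈ NS, (S.filter (fun x => G.Adj x y ∧ F x ≠ y)).card := by
      refine (Finset.sum_subset (Finset.subset_univ NS) ?_).symm
      intro y _ hyn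
      rw [Finset.card_eq_zero, Finset.eq_empty_iff_forall_notMem]
      intro x hx
      obtain ⟨hxS, hxa, hxF⟩ := Finset.mem_filter.mp hx
      exact hyn (Finset.mem_biUnion.mpr ⟨x, hxS, Finset.mem_erase.mpr
        ⟨fun h => hxF h.symm, (SimpleGraph.mem_neighborFinset _ _ _).mpr hxa⟩⟩)
    have hup : ∑ y ∈ NS, (S.filter (fun x => G.Adj x y ∧ F x ≠ y)).card ≤ NS.card * 2 := by
      calc _ ≤ NS.card • 2 := by
            refine Finset.sum_le_card_nsmul NS _ 2 ?_
            intro y hy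
            have hsub : S.filter (fun x => G.Adj x y ∧ F x ≠ y)
                ⊆ (G.neighborFinset y) \ (G.neighborFinset y0) := by
              intro t ht
              obtain ⟨htS, hta, htF⟩ := Finset.mem_filter.mp ht
              refine Finset.mem_sdiff.mpr ⟨(SimpleGraph.mem_neighborFinset _ _ _).mpr hta.symm,
                fun h => ?_⟩
              have : t ∈ (G.neighborFinset y0) ∩ S := Finset.mem_inter.mpr ⟨h, htS⟩
              rw [hy0S] at this
              exact absurd this (Finset.notMem_empty t)
            exact le_trans (Finset.card_le_card hsub) (hsim y y0 (hdense y (hNSY hy) y0 hy0))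
      _ = NS.card * 2 := by rw [smul_eq_mul]
    rw [hres] at hlow
    omega
  · push_neg at h0
    by_contra hcon
    push_neg at hcon
    set badY := Yf \ NS with hbadY
    have key1 : ∀ y ∈ badY, ∀ x ∈ (G.neighborFinset y) ∩ S, F x = y := by
      intro y hy x hx
      obtain ⟨hx1, hx2⟩ := Finset.mem_inter.mp hx
      by_contra hne
      have : y ∈ NS := Finset.mem_biUnion.mpr ⟨x, hx2, Finset.mem_erase.mpr
        ⟨fun h => hne h.symm,
          (SimpleGraph.mem_neighborFinset _ _ _).mpr ((SimpleGraph.mem_neighborFinset _ _ _).mp hx1).symm⟩⟩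
      exact (Finset.mem_sdiff.mp hy).2 this
    have key2 : ∀ y ∈ badY, ((G.neighborFinset y) ∩ S).card ≤ 1 := by
      intro y hy
      refine Finset.card_le_one.mpr ?_
      intro a ha b hb
      have h1 := key1 y hy a ha
      have h2 := key1 y hy b hb
      exact hFinj (hS (Finset.mem_inter.mp ha).2) (hS (Finset.mem_inter.mp hb).2) (by rw [h1, h2])
    have key3 : badY.card ≤ S.card := by
      have hsub : badY ⊆ S.image F := by
        intro y hy
        have hyY := (Finset.mem_sdiff.mp hy).1
        obtain ⟨x, hx⟩ := (h0 y hyY)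
        obtain ⟨hx1, hx2⟩ := Finset.mem_inter.mp hx
        exact Finset.mem_image.mpr ⟨x, hx2, key1 y hy x (Finset.mem_inter.mpr ⟨hx1, hx2⟩)⟩
      exact le_trans (Finset.card_le_card hsub) (Finset.card_image_le)
    have key4 : badY.card + NS.card = Yf.card := Finset.card_sdiff_add_card_eq_card hNSY
    have hSX : S.card ≤ Xf.card := Finset.card_le_card hS
    have hbadne : badY.Nonempty := by
      rw [← Finset.card_pos]
      omega
    obtain ⟨yb, hyb⟩ := hbadne
    have hybY : yb ∈ Yf := (Finset.mem_sdiff.mp hyb).1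
    have key5 : ∀ y ∈ Yf, ((G.neighborFinset y) ∩ S).card ≤ 3 := by
      intro y hy
      have hsub : (G.neighborFinset y) ∩ S
          ⊆ ((G.neighborFinset yb) ∩ S) ∪ ((G.neighborFinset y) \ (G.neighborFinset yb)) := by
        intro t ht
        obtain ⟨ht1, ht2⟩ := Finset.mem_inter.mp ht
        by_cases htb : t ∈ G.neighborFinset yb
        · exact Finset.mem_union_left _ (Finset.mem_inter.mpr ⟨htb, ht2⟩)
        · exact Finset.mem_union_right _ (Finset.mem_sdiff.mpr ⟨ht1, htb⟩)
      calc ((G.neighborFinset y) ∩ S).card ≤ _ := Finset.card_le_card hsub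
        _ ≤ ((G.neighborFinset yb) ∩ S).card
            + ((G.neighborFinset y) \ (G.neighborFinset yb)).card := Finset.card_union_le _ _
        _ ≤ 1 + 2 := Nat.add_le_add (key2 yb hyb) (hsim y yb (hdense y hy yb hybY))
    have hlow : 4 * S.card ≤ ∑ x ∈ S, (G.neighborFinset x).card := by
      calc 4 * S.card = S.card • 4 := by rw [smul_eq_mul]; ring
      _ ≤ _ := Finset.card_nsmul_le_sum S _ 4 (fun x _ => hdeg4 x)
    rw [stmt8_dcount G S] at hlow
    have hresY : ∑ y ∈ Finset.univ, ((G.neighborFinset y) ∩ S).card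
        = ∑ y ∈ Yf, ((G.neighborFinset y) ∩ S).card := by
      refine (Finset.sum_subset (Finset.subset_univ Yf) ?_).symm
      intro y _ hyn
      rw [Finset.card_eq_zero, Finset.eq_empty_iff_forall_notMem]
      intro x hx
      obtain ⟨hx1, hx2⟩ := Finset.mem_inter.mp hx
      have hyX : y ∈ Xf := (hXY y).resolve_right hyn
      have hadjyx := (SimpleGraph.mem_neighborFinset _ _ _).mp hx1
      rcases hadj y x hadjyx with ⟨_, h⟩ | ⟨h, _⟩
      · exact hdisjXY x ⟨hS hx2, h⟩
      · exact hdisjXY y ⟨hyX, h⟩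
    rw [hresY] at hlow
    have hsplit : ∑ y ∈ Yf, ((G.neighborFinset y) ∩ S).card
        = ∑ y ∈ badY, ((G.neighborFinset y) ∩ S).card
          + ∑ y ∈ NS, ((G.neighborFinset y) ∩ S).card := by
      rw [hbadY]
      exact (Finset.sum_sdiff hNSY).symm
    have hb1 : ∑ y ∈ badY, ((G.neighborFinset y) ∩ S).card ≤ badY.card * 1 := by
      calc _ ≤ badY.card • 1 := Finset.sum_le_card_nsmul badY _ 1 key2
      _ = badY.card * 1 := by rw [smul_eq_mul]
    have hb2 : ∑ y ∈ NS, ((G.neighborFinset y) ∩ S).card ≤ NS.card * 3 := by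
      calc _ ≤ NS.card • 3 := Finset.sum_le_card_nsmul NS _ 3 (fun y hy => key5 y (hNSY hy))
      _ = NS.card * 3 := by rw [smul_eq_mul]
    omega

end Hall


end Stmt8Aux

section Stmt8Aux2
set_option linter.unusedSectionVars false

lemma stmt8_buildH {V : Type*} [Fintype V] [DecidableEq V] (G : SimpleGraph V)
    (X Y : Set V) (hbip : IsBipartition G X Y) (F G2 : V → V)
    (hFadj : ∀ x ∈ X, G.Adj x (F x)) (hGadj : ∀ x ∈ X, G.Adj x (G2 x))
    (hne : ∀ x ∈ X, F x ≠ G2 x)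
    (hFinj : Set.InjOn F X) (hGinj : Set.InjOn G2 X)
    (hFsurj : ∀ y ∈ Y, ∃ x ∈ X, F x = y) (hGsurj : ∀ y ∈ Y, ∃ x ∈ X, G2 x = y) :
    ∃ H ≤ G, ∀ v, (H.neighborSet v).ncard = 2 := by
  obtain ⟨hXY, hdisj, hadj⟩ := hbip
  have hd : ∀ a : V, a ∈ X → a ∈ Y → False := fun a ha hb => Set.disjoint_left.mp hdisj ha hb
  have hFY : ∀ x ∈ X, F x ∈ Y := by
    intro x hx
    rcases hadj (hFadj x hx) with ⟨_, h⟩ | ⟨h, _⟩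
    · exact h
    · exact absurd h (fun h' => hd x hx h')
  have hGY : ∀ x ∈ X, G2 x ∈ Y := by
    intro x hx
    rcases hadj (hGadj x hx) with ⟨_, h⟩ | ⟨h, _⟩
    · exact h
    · exact absurd h (fun h' => hd x hx h')
  refine ⟨SimpleGraph.fromRel (fun u v => u ∈ X ∧ (v = F u ∨ v = G2 u)), ?_, ?_⟩
  · intro u v huv
    rw [SimpleGraph.fromRel_adj] at huv
    obtain ⟨hne', h | h⟩ := huv
    · obtain ⟨hu, rfl | rfl⟩ := h
      · exact hFadj u hu
      · exact hGadj u hu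
    · obtain ⟨hv, rfl | rfl⟩ := h
      · exact (hFadj v hv).symm
      · exact (hGadj v hv).symm
  · intro v
    rcases hXY v with hvX | hvY
    · have hset : (SimpleGraph.fromRel
          (fun u v => u ∈ X ∧ (v = F u ∨ v = G2 u))).neighborSet v = {F v, G2 v} := by
        ext w
        simp only [SimpleGraph.mem_neighborSet, SimpleGraph.fromRel_adj, Set.mem_insert_iff,
          Set.mem_singleton_iff]
        constructor
        · rintro ⟨hnev, ⟨hvX', h⟩ | ⟨hwX, h⟩⟩
          · exact h
          · exfalso
            rcases h with h | h
            · exact hd v hvX (h ▸ hFY w hwX)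
            · exact hd v hvX (h ▸ hGY w hwX)
        · rintro (rfl | rfl)
          · exact ⟨fun h => hd v hvX (h ▸ hFY v hvX), Or.inl ⟨hvX, Or.inl rfl⟩⟩
          · exact ⟨fun h => hd v hvX (h ▸ hGY v hvX), Or.inl ⟨hvX, Or.inr rfl⟩⟩
      rw [hset]
      exact Set.ncard_pair (hne v hvX)
    · obtain ⟨xF, hxFX, hxF⟩ := hFsurj v hvY
      obtain ⟨xG, hxGX, hxG⟩ := hGsurj v hvY
      have hset : (SimpleGraph.fromRel
          (fun u v => u ∈ X ∧ (v = F u ∨ v = G2 u))).neighborSet v = {xF, xG} := by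
        ext w
        simp only [SimpleGraph.mem_neighborSet, SimpleGraph.fromRel_adj, Set.mem_insert_iff,
          Set.mem_singleton_iff]
        constructor
        · rintro ⟨hnev, ⟨hvX', _⟩ | ⟨hwX, h⟩⟩
          · exact absurd hvX' (fun h' => hd v h' hvY)
          · rcases h with h | h
            · exact Or.inl (hFinj hwX hxFX (by rw [← h, hxF]))
            · exact Or.inr (hGinj hwX hxGX (by rw [← h, hxG]))
        · rintro (rfl | rfl)
          · exact ⟨fun h => hd w hxFX (h ▸ hvY), Or.inr ⟨hxFX, Or.inl hxF.symm⟩⟩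
          · exact ⟨fun h => hd w hxGX (h ▸ hvY), Or.inr ⟨hxGX, Or.inr hxG.symm⟩⟩
      rw [hset]
      refine Set.ncard_pair (fun h => ?_)
      exact hne xF hxFX (by rw [hxF, h, hxG])


end Stmt8Aux2

/-- Every connected balanced `S_{1,3}`-free bipartite graph with minimum degree at least
`4` contains a `2`-factor. -/
theorem stmt8 {V : Type*} [Fintype V] [DecidableEq V] (G : SimpleGraph V)
    (X Y : Set V) (hbip : IsBipartition G X Y) (hbal : X.ncard = Y.ncard)
    (hconn : G.Connected) (hfree : SFree 1 3 G)
    (hdeg : ∀ v, 4 ≤ (G.neighborSet v).ncard) :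
    ∃ H ≤ G, ∀ v, (H.neighborSet v).ncard = 2 := by
  classical
  letI : DecidableRel G.Adj := Classical.decRel _
  have hXfin : X.Finite := Set.toFinite X
  have hYfin : Y.Finite := Set.toFinite Y
  set Xf := hXfin.toFinset with hXfdef
  set Yf := hYfin.toFinset with hYfdef
  have hmemX : ∀ v : V, v ∈ Xf ↔ v ∈ X := fun v => Set.Finite.mem_toFinset hXfin
  have hmemY : ∀ v : V, v ∈ Yf ↔ v ∈ Y := fun v => Set.Finite.mem_toFinset hYfin
  have hd : ∀ a : V, a ∈ X → a ∈ Y → False :=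
    fun a ha hb => Set.disjoint_left.mp hbip.2.1 ha hb
  have hXY' : ∀ v : V, v ∈ Xf ∨ v ∈ Yf := by
    intro v
    rcases hbip.1 v with h | h
    · exact Or.inl ((hmemX v).mpr h)
    · exact Or.inr ((hmemY v).mpr h)
  have hdisjXY : ∀ v : V, ¬(v ∈ Xf ∧ v ∈ Yf) :=
    fun v h => hd v ((hmemX v).mp h.1) ((hmemY v).mp h.2)
  have hadj' : ∀ u v : V, G.Adj u v → (u ∈ Xf ∧ v ∈ Yf) ∨ (u ∈ Yf ∧ v ∈ Xf) := by
    intro u v h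
    rcases hbip.2.2 h with ⟨h1, h2⟩ | ⟨h1, h2⟩
    · exact Or.inl ⟨(hmemX u).mpr h1, (hmemY v).mpr h2⟩
    · exact Or.inr ⟨(hmemY u).mpr h1, (hmemX v).mpr h2⟩
  have hbal' : Xf.card = Yf.card := by
    rw [← Set.ncard_eq_toFinset_card X hXfin, ← Set.ncard_eq_toFinset_card Y hYfin]
    exact hbal
  have hdeg' : ∀ v, 4 ≤ (G.neighborFinset v).card := by
    intro v
    have h := hdeg v
    rwa [Set.ncard_eq_toFinset_card', ← SimpleGraph.neighborFinset_def] at h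
  have hsame : ∀ u v x : V, G.Adj u x → G.Adj v x → ¬ G.Adj u v := by
    intro u v x hux hvx huv
    rcases hbip.2.2 hux with ⟨h1, h2⟩ | ⟨h1, h2⟩ <;>
      rcases hbip.2.2 hvx with ⟨h3, h4⟩ | ⟨h3, h4⟩ <;>
      rcases hbip.2.2 huv with ⟨h5, h6⟩ | ⟨h5, h6⟩ <;>
      first
        | exact hd u h1 h5 | exact hd u h5 h1
        | exact hd v h3 h6 | exact hd v h6 h3
        | exact hd x h2 h4 | exact hd x h4 h2
  have hsim : ∀ y y' : V, ((G.neighborFinset y) ∩ (G.neighborFinset y')).Nonempty →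
      ((G.neighborFinset y) \ (G.neighborFinset y')).card ≤ 2 := by
    intro y y' hne
    obtain ⟨x, hx⟩ := hne
    obtain ⟨hx1, hx2⟩ := Finset.mem_inter.mp hx
    by_cases hyy : y' = y
    · subst hyy; simp
    · exact stmt8_L1 hfree hsame ((SimpleGraph.mem_neighborFinset _ _ _).mp hx1).symm
        ((SimpleGraph.mem_neighborFinset _ _ _).mp hx2).symm hyy
  have hY4orDense :
      (∀ y ∈ Yf, ∀ y' ∈ Yf, ((G.neighborFinset y) ∩ (G.neighborFinset y')).Nonempty)
      ∨ (∀ y ∈ Yf, (G.neighborFinset y).card ≤ 4) := by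
    by_cases hdense : ∀ y ∈ Yf, ∀ y' ∈ Yf,
        ((G.neighborFinset y) ∩ (G.neighborFinset y')).Nonempty
    · exact Or.inl hdense
    · push_neg at hdense
      obtain ⟨y0, hy0, y1, hy1, hne01⟩ := hdense
      have hEmpty := hne01
      obtain ⟨p, m, q, hp, hm, hq, hpq, hpm, hmq⟩ :=
        stmt8_cert hdisjXY hadj' hconn hdeg' hy0 hy1 hEmpty
      exact Or.inr (stmt8_degY4 hdisjXY hadj' hconn hdeg' hsim hm hpq hpm hmq)
  have hall1 : ∀ S : Finset V, S ⊆ Xf →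
      S.card ≤ (S.biUnion (fun x => G.neighborFinset x)).card := by
    rcases hY4orDense with h | h
    · exact fun S hS => stmt8_hallA hXY' hdisjXY hadj' hdeg' hbal' hsim h S hS
    · exact fun S hS => stmt8_hallB hdisjXY hadj' hdeg' h S hS
  have hallsub1 : ∀ s : Finset {x // x ∈ Xf},
      s.card ≤ (s.biUnion (fun x => G.neighborFinset x.val)).card := by
    intro s
    have hsub : s.image Subtype.val ⊆ Xf := by
      intro x hx
      obtain ⟨⟨a, ha⟩, _, rfl⟩ := Finset.mem_image.mp hx
      exact ha
    have hcard : (s.image Subtype.val).card = s.card :=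
      Finset.card_image_of_injective s Subtype.val_injective
    have hbu : (s.image Subtype.val).biUnion (fun x => G.neighborFinset x)
        = s.biUnion (fun x => G.neighborFinset x.val) := by
      ext y
      simp only [Finset.mem_biUnion, Finset.mem_image]
      constructor
      · rintro ⟨v, ⟨a, ha, rfl⟩, hy⟩
        exact ⟨a, ha, hy⟩
      · rintro ⟨a, ha, hy⟩
        exact ⟨a.val, ⟨a, ha, rfl⟩, hy⟩
    have h := hall1 (s.image Subtype.val) hsub
    rwa [hcard, hbu] at h
  obtain ⟨f0, hf0inj, hf0mem⟩ :=
    (Finset.all_card_le_biUnion_card_iff_exists_injective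
      (fun x : {x // x ∈ Xf} => G.neighborFinset x.val)).mp hallsub1
  set F : V → V := fun v => if h : v ∈ Xf then f0 ⟨v, h⟩ else v with hFdefn
  have hFdef : ∀ (x : V) (h : x ∈ Xf), F x = f0 ⟨x, h⟩ := by
    intro x h
    simp only [hFdefn, dif_pos h]
  have hFadj : ∀ x ∈ Xf, G.Adj x (F x) := by
    intro x hx
    rw [hFdef x hx]
    exact (SimpleGraph.mem_neighborFinset _ _ _).mp (hf0mem ⟨x, hx⟩)
  have hFinj : Set.InjOn F (Xf : Set V) := by
    intro a ha b hb hab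
    have ha' : a ∈ Xf := ha
    have hb' : b ∈ Xf := hb
    rw [hFdef a ha', hFdef b hb'] at hab
    exact congrArg Subtype.val (hf0inj hab)
  have hFY : ∀ x ∈ Xf, F x ∈ Yf := by
    intro x hx
    rcases hadj' x (F x) (hFadj x hx) with ⟨_, h⟩ | ⟨h, _⟩
    · exact h
    · exact absurd ⟨hx, h⟩ (hdisjXY x)
  have hFimg : Xf.image F = Yf := by
    apply Finset.eq_of_subset_of_card_le
    · intro y hy
      obtain ⟨x, hx, rfl⟩ := Finset.mem_image.mp hy
      exact hFY x hx
    · rw [Finset.card_image_of_injOn hFinj, ← hbal']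
  have hFsurj : ∀ y ∈ Yf, ∃ x ∈ Xf, F x = y := by
    intro y hy
    rw [← hFimg] at hy
    exact Finset.mem_image.mp hy
  have hall2 : ∀ S : Finset V, S ⊆ Xf →
      S.card ≤ (S.biUnion (fun x => (G.neighborFinset x).erase (F x))).card := by
    rcases hY4orDense with h | h
    · exact fun S hS => stmt8_hallA' F hXY' hdisjXY hadj' hdeg' hbal' hsim h hFinj S hS
    · exact fun S hS => stmt8_hallB' F hdisjXY hadj' hdeg' h hFadj hFsurj S hS
  have hallsub2 : ∀ s : Finset {x // x ∈ Xf},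
      s.card ≤ (s.biUnion (fun x => (G.neighborFinset x.val).erase (F x.val))).card := by
    intro s
    have hsub : s.image Subtype.val ⊆ Xf := by
      intro x hx
      obtain ⟨⟨a, ha⟩, _, rfl⟩ := Finset.mem_image.mp hx
      exact ha
    have hcard : (s.image Subtype.val).card = s.card :=
      Finset.card_image_of_injective s Subtype.val_injective
    have hbu : (s.image Subtype.val).biUnion (fun x => (G.neighborFinset x).erase (F x))
        = s.biUnion (fun x => (G.neighborFinset x.val).erase (F x.val)) := by
      ext y
      simp only [Finset.mem_biUnion, Finset.mem_image]
      constructor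
      · rintro ⟨v, ⟨a, ha, rfl⟩, hy⟩
        exact ⟨a, ha, hy⟩
      · rintro ⟨a, ha, hy⟩
        exact ⟨a.val, ⟨a, ha, rfl⟩, hy⟩
    have h := hall2 (s.image Subtype.val) hsub
    rwa [hcard, hbu] at h
  obtain ⟨g0, hg0inj, hg0mem⟩ :=
    (Finset.all_card_le_biUnion_card_iff_exists_injective
      (fun x : {x // x ∈ Xf} => (G.neighborFinset x.val).erase (F x.val))).mp hallsub2
  set G2 : V → V := fun v => if h : v ∈ Xf then g0 ⟨v, h⟩ else v with hGdefn
  have hGdef : ∀ (x : V) (h : x ∈ Xf), G2 x = g0 ⟨x, h⟩ := by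
    intro x h
    simp only [hGdefn, dif_pos h]
  have hGmem : ∀ (x : V) (h : x ∈ Xf), G2 x ∈ (G.neighborFinset x).erase (F x) := by
    intro x h
    rw [hGdef x h]
    exact hg0mem ⟨x, h⟩
  have hGadj : ∀ x ∈ Xf, G.Adj x (G2 x) := by
    intro x hx
    exact (SimpleGraph.mem_neighborFinset _ _ _).mp (Finset.mem_erase.mp (hGmem x hx)).2
  have hGne : ∀ x ∈ Xf, G2 x ≠ F x := by
    intro x hx
    exact (Finset.mem_erase.mp (hGmem x hx)).1
  have hGinj : Set.InjOn G2 (Xf : Set V) := by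
    intro a ha b hb hab
    have ha' : a ∈ Xf := ha
    have hb' : b ∈ Xf := hb
    rw [hGdef a ha', hGdef b hb'] at hab
    exact congrArg Subtype.val (hg0inj hab)
  have hGY : ∀ x ∈ Xf, G2 x ∈ Yf := by
    intro x hx
    rcases hadj' x (G2 x) (hGadj x hx) with ⟨_, h⟩ | ⟨h, _⟩
    · exact h
    · exact absurd ⟨hx, h⟩ (hdisjXY x)
  have hGimg : Xf.image G2 = Yf := by
    apply Finset.eq_of_subset_of_card_le
    · intro y hy
      obtain ⟨x, hx, rfl⟩ := Finset.mem_image.mp hy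
      exact hGY x hx
    · rw [Finset.card_image_of_injOn hGinj, ← hbal']
  have hGsurj : ∀ y ∈ Yf, ∃ x ∈ Xf, G2 x = y := by
    intro y hy
    rw [← hGimg] at hy
    exact Finset.mem_image.mp hy
  exact stmt8_buildH G X Y hbip F G2
    (fun x hx => hFadj x ((hmemX x).mpr hx))
    (fun x hx => hGadj x ((hmemX x).mpr hx))
    (fun x hx h => hGne x ((hmemX x).mpr hx) h.symm)
    (fun a ha b hb hab => hFinj ((hmemX a).mpr ha) ((hmemX b).mpr hb) hab)
    (fun a ha b hb hab => hGinj ((hmemX a).mpr ha) ((hmemX b).mpr hb) hab)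
    (fun y hy => by
      obtain ⟨x, hx, he⟩ := hFsurj y ((hmemY y).mpr hy)
      exact ⟨x, (hmemX x).mp hx, he⟩)
    (fun y hy => by
      obtain ⟨x, hx, he⟩ := hGsurj y ((hmemY y).mpr hy)
      exact ⟨x, (hmemX x).mp hx, he⟩)
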